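/- For the discrete series (ν = 2n + ε - 1, n a positive integer, ε ∈ {0,1}), for every integer k ≥ 1, ((2k+ν+1)/(ν+1))^((ν-1)/2) ≤ |g⁰(n+2k)| ≤ ((ν+1)/2)·k^((ν-1)/2), where g⁰(n+2k) = ∏_{j=0}^{k-1} b⁺(n+2j)/b⁻(n+2j+2). -/

import Mathlib

lemma auxA {a c : ℝ} (ha : 0 ≤ a) (hc : 0 < c) :
    (1 + 1 / (c + a)) ^ a ≤ (c + a) / c := by
  have hca : 0 < c + a := by linarith
  have hu : (0:ℝ) < 1 + 1 / (c + a) := by positivity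
  have h1 : (1 + 1 / (c + a)) ^ a = Real.exp (a * Real.log (1 + 1 / (c + a))) := by
    rw [Real.rpow_def_of_pos hu, mul_comm]
  have h2 : Real.log (1 + 1 / (c + a)) ≤ 1 / (c + a) := by
    have := Real.log_le_sub_one_of_pos hu
    linarith
  have h3 : Real.exp (a * Real.log (1 + 1 / (c + a))) ≤ Real.exp (a / (c + a)) := by
    apply Real.exp_le_exp.mpr
    calc a * Real.log (1 + 1 / (c + a)) ≤ a * (1 / (c + a)) :=
          mul_le_mul_of_nonneg_left h2 ha
      _ = a / (c + a) := by ring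
  have h4 : Real.exp (a / (c + a)) ≤ (c + a) / c := by
    have h5 : c / (c + a) ≤ Real.exp (-(a / (c + a))) := by
      have h6 := Real.add_one_le_exp (-(a / (c + a)))
      have he : 1 - a / (c + a) = c / (c + a) := by field_simp; ring
      linarith [he ▸ (by linarith : 1 - a / (c + a) ≤ Real.exp (-(a / (c + a))))]
    have hcb : (0:ℝ) < c / (c + a) := by positivity
    have key : Real.exp (a / (c + a)) = 1 / Real.exp (-(a / (c + a))) := by
      rw [Real.exp_neg]; field_simp
    rw [key]
    calc 1 / Real.exp (-(a / (c + a))) ≤ 1 / (c / (c + a)) :=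
          one_div_le_one_div_of_le hcb h5
      _ = (c + a) / c := by field_simp
  calc (1 + 1 / (c + a)) ^ a = Real.exp (a * Real.log (1 + 1 / (c + a))) := h1
    _ ≤ Real.exp (a / (c + a)) := h3
    _ ≤ (c + a) / c := h4

lemma auxB {a c : ℝ} (ha : 0 ≤ a) (hc : 1 ≤ c) :
    (c + a + 1) / (c + 1) ≤ ((c + 1) / c) ^ a := by
  have hc0 : (0:ℝ) < c := by linarith
  have hipos : (0:ℝ) ≤ 1 / c := by positivity
  have hb : (1:ℝ) + (a + 1) * (1 / c) ≤ (1 + 1 / c) ^ (a + 1) :=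
    one_add_mul_self_le_rpow_one_add (by linarith) (by linarith)
  have he : (1:ℝ) + 1 / c = (c + 1) / c := by field_simp
  have hpos : (0:ℝ) < (c + 1) / c := by positivity
  have hsplit : ((c + 1) / c) ^ (a + 1) = ((c + 1) / c) ^ a * ((c + 1) / c) := by
    rw [Real.rpow_add hpos, Real.rpow_one]
  rw [he, hsplit] at hb
  have h1 : (1:ℝ) + (a + 1) * (1 / c) = (c + a + 1) / c := by field_simp; ring
  rw [h1] at hb
  rw [div_le_iff₀ (by positivity : (0:ℝ) < c + 1)]
  have h2 := mul_le_mul_of_nonneg_right hb (le_of_lt hc0)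
  calc (c + a + 1) = (c + a + 1) / c * c := by field_simp
    _ ≤ (((c + 1) / c) ^ a * ((c + 1) / c)) * c := h2
    _ = ((c + 1) / c) ^ a * (c + 1) := by field_simp

lemma lowerP {a : ℝ} (ha : 0 ≤ a) (k : ℕ) :
    (((k:ℝ) + a + 1) / (a + 1)) ^ a ≤
      ∏ j ∈ Finset.range k, (((j:ℝ) + a + 1) / ((j:ℝ) + 1)) := by
  induction k with
  | zero => simp [div_self (show (a:ℝ) + 1 ≠ 0 by positivity)]
  | succ k ih =>
    rw [Finset.prod_range_succ]
    push_cast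
    have hratio : (((k:ℝ) + 1 + a + 1) / (a + 1)) ^ a ≤
        (((k:ℝ) + a + 1) / (a + 1)) ^ a * (((k:ℝ) + a + 1) / ((k:ℝ) + 1)) := by
      have hA := auxA ha (show (0:ℝ) < (k:ℝ) + 1 by positivity) (a := a)
      have hkey : (((k:ℝ) + 1 + a + 1) / (a + 1)) =
          (((k:ℝ) + a + 1) / (a + 1)) * (1 + 1 / ((k:ℝ) + 1 + a)) := by
        field_simp
        ring
      rw [hkey, Real.mul_rpow (by positivity) (by positivity)]
      apply mul_le_mul_of_nonneg_left _ (by positivity)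
      calc (1 + 1 / ((k:ℝ) + 1 + a)) ^ a ≤ ((k:ℝ) + 1 + a) / ((k:ℝ) + 1) := hA
        _ = ((k:ℝ) + a + 1) / ((k:ℝ) + 1) := by ring_nf
    calc (((k:ℝ) + 1 + a + 1) / (a + 1)) ^ a
        ≤ (((k:ℝ) + a + 1) / (a + 1)) ^ a * (((k:ℝ) + a + 1) / ((k:ℝ) + 1)) := hratio
      _ ≤ (∏ j ∈ Finset.range k, (((j:ℝ) + a + 1) / ((j:ℝ) + 1))) *
            (((k:ℝ) + a + 1) / ((k:ℝ) + 1)) :=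
          mul_le_mul_of_nonneg_right ih (by positivity)

lemma upperP {a : ℝ} (ha : 0 ≤ a) (k : ℕ) (hk : 1 ≤ k) :
    (∏ j ∈ Finset.range k, (((j:ℝ) + a + 1) / ((j:ℝ) + 1))) ≤ (a + 1) * (k:ℝ) ^ a := by
  induction k with
  | zero => omega
  | succ k ih =>
    rcases Nat.lt_or_ge 1 (k + 1) with h1 | h1
    · have hk1 : 1 ≤ k := by omega
      have hk1' : (1:ℝ) ≤ (k:ℝ) := by exact_mod_cast hk1
      have hB := auxB ha hk1' (a := a)
      have h2 : (k:ℝ) ^ a * (((k:ℝ) + a + 1) / ((k:ℝ) + 1)) ≤ ((k:ℝ) + 1) ^ a := by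
        calc (k:ℝ) ^ a * (((k:ℝ) + a + 1) / ((k:ℝ) + 1))
            ≤ (k:ℝ) ^ a * (((k:ℝ) + 1) / (k:ℝ)) ^ a :=
              mul_le_mul_of_nonneg_left hB (by positivity)
          _ = ((k:ℝ) + 1) ^ a := by
              rw [← Real.mul_rpow (by positivity) (by positivity)]
              congr 1
              field_simp
      rw [Finset.prod_range_succ]
      push_cast
      calc (∏ j ∈ Finset.range k, (((j:ℝ) + a + 1) / ((j:ℝ) + 1))) *
              (((k:ℝ) + a + 1) / ((k:ℝ) + 1))
          ≤ ((a + 1) * (k:ℝ) ^ a) * (((k:ℝ) + a + 1) / ((k:ℝ) + 1)) :=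
            mul_le_mul_of_nonneg_right (ih hk1) (by positivity)
        _ = (a + 1) * ((k:ℝ) ^ a * (((k:ℝ) + a + 1) / ((k:ℝ) + 1))) := by ring
        _ ≤ (a + 1) * ((k:ℝ) + 1) ^ a := mul_le_mul_of_nonneg_left h2 (by linarith)
    · obtain rfl : k = 0 := by omega
      simp [Finset.prod_range_one]

theorem stmt9 (n : ℕ) (hn : 1 ≤ n) (ε : ℕ) (hε : ε ≤ 1) (ν : ℝ)
    (hν : ν = 2 * (n : ℝ) + ε - 1) (k : ℕ) (hk : 1 ≤ k) :
    ((2 * (k : ℝ) + ν + 1) / (ν + 1)) ^ ((ν - 1) / 2) ≤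
      |∏ j ∈ Finset.range k,
        ((2 * ((n : ℝ) + 2 * j) + ε + 1 + ν) / 4) / ((2 * ((n : ℝ) + 2 * j + 2) + ε - 1 - ν) / 4)| ∧
    |∏ j ∈ Finset.range k,
        ((2 * ((n : ℝ) + 2 * j) + ε + 1 + ν) / 4) / ((2 * ((n : ℝ) + 2 * j + 2) + ε - 1 - ν) / 4)| ≤
      ((ν + 1) / 2) * (k : ℝ) ^ ((ν - 1) / 2) := by
  set a := (ν - 1) / 2 with ha_def
  have hn' : (1:ℝ) ≤ (n:ℝ) := by exact_mod_cast hn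
  have hε' : (0:ℝ) ≤ (ε:ℝ) := Nat.cast_nonneg ε
  have hν1 : (1:ℝ) ≤ ν := by rw [hν]; linarith
  have ha : 0 ≤ a := by rw [ha_def]; linarith
  have hνa : ν = 2 * a + 1 := by rw [ha_def]; ring
  have hfac : ∀ j : ℕ,
      ((2 * ((n : ℝ) + 2 * j) + ε + 1 + ν) / 4) / ((2 * ((n : ℝ) + 2 * j + 2) + ε - 1 - ν) / 4)
        = ((j:ℝ) + a + 1) / ((j:ℝ) + 1) := by
    intro j
    have hden : (2 * ((n : ℝ) + 2 * j + 2) + ε - 1 - ν) / 4 = (j:ℝ) + 1 := by rw [hν]; ring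
    have hnum : (2 * ((n : ℝ) + 2 * j) + ε + 1 + ν) / 4 = (j:ℝ) + a + 1 := by
      rw [ha_def, hν]; ring
    rw [hden, hnum]
  have hprodeq : (∏ j ∈ Finset.range k,
      ((2 * ((n : ℝ) + 2 * j) + ε + 1 + ν) / 4) / ((2 * ((n : ℝ) + 2 * j + 2) + ε - 1 - ν) / 4))
      = ∏ j ∈ Finset.range k, (((j:ℝ) + a + 1) / ((j:ℝ) + 1)) :=
    Finset.prod_congr rfl fun j _ => hfac j
  have hpos : 0 < ∏ j ∈ Finset.range k, (((j:ℝ) + a + 1) / ((j:ℝ) + 1)) :=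
    Finset.prod_pos fun j _ => by positivity
  rw [hprodeq, abs_of_pos hpos]
  have hL : (2 * (k : ℝ) + ν + 1) / (ν + 1) = ((k:ℝ) + a + 1) / (a + 1) := by
    rw [hνa]
    have h1 : (0:ℝ) < a + 1 := by linarith
    field_simp
    ring
  have hC : (ν + 1) / 2 = a + 1 := by rw [hνa]; ring
  rw [hL, hC]
  exact ⟨lowerP ha k, upperP ha k hk⟩
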